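/- The quartic form Ŝ(x) = -18 x1 x2 x3 x4 + 4√3 x1 x4³ - 4√3 x2³ x3 + 3 x2² x4² - 9 x1² x3² on ℂ^4 is invariant under the one-parameter groups generated by the matrices E_1, E_2, E_3 of the irreducible 4-dimensional sp(1)-representation; equivalently, the directional derivative of Ŝ at x in the direction E_s·x vanishes for all x ∈ ℂ^4 and s = 1, 2, 3. -/

import Mathlib

noncomputable section
open Complex Matrix Finset

/-- The real number √3 viewed as a complex number. -/
def s3 : ℂ := (Real.sqrt 3 : ℝ)

/-- The matrices `E₁, E₂, E₃` of the irreducible 4-dimensional representation of `sp(1)`. -/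
def E : Fin 3 → Matrix (Fin 4) (Fin 4) ℂ :=
  ![!![-3*I/2, 0, 0, 0;
      0, -I/2, 0, 0;
      0, 0, 3*I/2, 0;
      0, 0, 0, I/2],
    !![0, -s3/2, 0, 0;
      s3/2, 0, 0, 1;
      0, 0, 0, -s3/2;
      0, -1, s3/2, 0],
    !![0, I*s3/2, 0, 0;
      I*s3/2, 0, 0, -I;
      0, 0, 0, -I*s3/2;
      0, -I, -I*s3/2, 0]]

/-- The quartic form of the cubic discriminant:
`Ŝ(x) = -18 x₁x₂x₃x₄ + 4√3 x₁x₄³ - 4√3 x₂³x₃ + 3 x₂²x₄² - 9 x₁²x₃²`. -/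
def Q (x : Fin 4 → ℂ) : ℂ :=
  -18 * x 0 * x 1 * x 2 * x 3 + 4 * s3 * x 0 * (x 3)^3 - 4 * s3 * (x 1)^3 * x 2
    + 3 * (x 1)^2 * (x 3)^2 - 9 * (x 0)^2 * (x 2)^2

/-- The derivative of `Q` in direction `v`. -/
lemma hQderiv (x v : Fin 4 → ℂ) :
    fderiv ℂ Q x v =
      -18 * (v 0 * x 1 * x 2 * x 3 + x 0 * v 1 * x 2 * x 3 + x 0 * x 1 * v 2 * x 3
        + x 0 * x 1 * x 2 * v 3)
      + 4 * s3 * (v 0 * (x 3)^3 + 3 * x 0 * (x 3)^2 * v 3)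
      - 4 * s3 * (3 * (x 1)^2 * v 1 * x 2 + (x 1)^3 * v 2)
      + 3 * (2 * x 1 * v 1 * (x 3)^2 + 2 * (x 1)^2 * x 3 * v 3)
      - 9 * (2 * x 0 * v 0 * (x 2)^2 + 2 * (x 0)^2 * x 2 * v 2) := by
  have h : ∀ i : Fin 4, HasFDerivAt (fun y : Fin 4 → ℂ => y i)
      ((ContinuousLinearMap.proj i : (Fin 4 → ℂ) →L[ℂ] ℂ)) x := fun i =>
    (ContinuousLinearMap.proj (R := ℂ) (φ := fun _ : Fin 4 => ℂ) i).hasFDerivAt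
  have hQeq : Q = fun y : Fin 4 → ℂ =>
      -18 * y 0 * y 1 * y 2 * y 3 + 4 * s3 * y 0 * y 3 * y 3 * y 3
        - 4 * s3 * y 1 * y 1 * y 1 * y 2 + 3 * y 1 * y 1 * y 3 * y 3
        - 9 * y 0 * y 0 * y 2 * y 2 := by
    funext y; simp only [Q]; ring
  have t1 := ((((h 0).const_mul (-18)).mul (h 1)).mul (h 2)).mul (h 3)
  have t2 := ((((h 0).const_mul (4 * s3)).mul (h 3)).mul (h 3)).mul (h 3)
  have t3 := ((((h 1).const_mul (4 * s3)).mul (h 1)).mul (h 1)).mul (h 2)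
  have t4 := ((((h 1).const_mul 3).mul (h 1)).mul (h 3)).mul (h 3)
  have t5 := ((((h 0).const_mul 9).mul (h 0)).mul (h 2)).mul (h 2)
  have hd := (((t1.add t2).sub t3).add t4).sub t5
  rw [hQeq] at *
  rw [(show HasFDerivAt (fun y : Fin 4 → ℂ =>
        -18 * y 0 * y 1 * y 2 * y 3 + 4 * s3 * y 0 * y 3 * y 3 * y 3
          - 4 * s3 * y 1 * y 1 * y 1 * y 2 + 3 * y 1 * y 1 * y 3 * y 3
          - 9 * y 0 * y 0 * y 2 * y 2) _ x from hd).fderiv]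
  simp only [ContinuousLinearMap.add_apply, ContinuousLinearMap.sub_apply,
    ContinuousLinearMap.smul_apply, ContinuousLinearMap.proj_apply, smul_eq_mul, Pi.mul_apply]
  ring

lemma hE0 (x : Fin 4 → ℂ) : (E 0).mulVec x =
    ![-3*I/2 * x 0, -I/2 * x 1, 3*I/2 * x 2, I/2 * x 3] := by
  funext i
  fin_cases i <;> simp [E, Matrix.mulVec, dotProduct, Fin.sum_univ_four]

lemma hE1 (x : Fin 4 → ℂ) : (E 1).mulVec x =
    ![-s3/2 * x 1, s3/2 * x 0 + x 3, -s3/2 * x 3, -x 1 + s3/2 * x 2] := by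
  funext i
  fin_cases i <;> simp [E, Matrix.mulVec, dotProduct, Fin.sum_univ_four]

lemma hE2 (x : Fin 4 → ℂ) : (E 2).mulVec x =
    ![I*s3/2 * x 1, I*s3/2 * x 0 - I * x 3, -I*s3/2 * x 3, -I * x 1 - I*s3/2 * x 2] := by
  funext i
  fin_cases i <;> simp [E, Matrix.mulVec, dotProduct, Fin.sum_univ_four] <;> ring

/-- The quartic form `Ŝ` is infinitesimally invariant under the irreducible `sp(1)` action:
the directional derivative of `Ŝ` at `x` in the direction `E_s·x` vanishes for all
`x ∈ ℂ⁴` and `s = 1, 2, 3`. -/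
theorem discriminant_infinitesimally_invariant :
    ∀ (x : Fin 4 → ℂ) (s : Fin 3), fderiv ℂ Q x ((E s).mulVec x) = 0 := by
  intro x s
  have hs3 : s3 * s3 = 3 := by
    simp [s3, ← Complex.ofReal_mul, Real.mul_self_sqrt]
  rw [hQderiv]
  fin_cases s <;> beta_reduce <;>
    simp only [Fin.zero_eta, Fin.mk_one, Fin.reduceFinMk]
  · rw [hE0]
    simp only [Matrix.cons_val_zero, Matrix.cons_val_one, Matrix.head_cons,
      Matrix.cons_val_two, Matrix.cons_val_three, Matrix.tail_cons]
    ring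
  · rw [hE1]
    simp only [Matrix.cons_val_zero, Matrix.cons_val_one, Matrix.head_cons,
      Matrix.cons_val_two, Matrix.cons_val_three, Matrix.tail_cons]
    linear_combination (-2 * x 1 * (x 3)^3 + 2 * (x 1)^3 * x 3 + 6 * x 0 * x 2 * (x 3)^2
      - 6 * x 0 * (x 1)^2 * x 2) * hs3
  · rw [hE2]
    simp only [Matrix.cons_val_zero, Matrix.cons_val_one, Matrix.head_cons,
      Matrix.cons_val_two, Matrix.cons_val_three, Matrix.tail_cons]
    linear_combination (2 * x 1 * (x 3)^3 + 2 * (x 1)^3 * x 3 - 6 * x 0 * x 2 * (x 3)^2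
      - 6 * x 0 * (x 1)^2 * x 2) * I * hs3
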